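/- Let d ≥ 1 and suppose nonnegative reals σ²_u are given for each nonempty subset u of {1,…,d}, with σ²_∅ = 0. Define the game val(u) = Σ_{v ⊆ u} σ²_v for u ⊆ {1,…,d}. Then the Shapley value of player j for this game equals φ_j = Σ_{u ⊆ {1,…,d}, j ∈ u} σ²_u / |u|. -/

import Mathlib

open Finset

/-- The Shapley value of player `j` for the cooperative game `val` on subsets of `Fin d`. -/
noncomputable def shapley {d : ℕ} (val : Finset (Fin d) → ℝ) (j : Fin d) : ℝ :=
  (d : ℝ)⁻¹ * ∑ u ∈ (Finset.univ.erase j).powerset,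
    ((Nat.choose (d - 1) u.card : ℝ))⁻¹ * (val (insert j u) - val u)

lemma key_choose (n m : ℕ) (hm : m ≤ n) :
    ∑ i ∈ range (n - m + 1), ((n - m).choose i : ℝ) * ((n.choose (m + i) : ℝ))⁻¹
      = (n + 1) / (m + 1) := by
  have hnm : ∀ i ∈ range (n - m + 1), m + i ≤ n := by
    intro i hi
    have := Nat.lt_succ_iff.mp (mem_range.mp hi)
    omega
  have step : ∀ i ∈ range (n - m + 1),
      ((n - m).choose i : ℝ) * ((n.choose (m + i) : ℝ))⁻¹
        = ((m + i).choose m : ℝ) * ((n.choose m : ℝ))⁻¹ := by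
    intro i hi
    have h1 : n.choose (m + i) * (m + i).choose m = n.choose m * (n - m).choose i := by
      have := Nat.choose_mul (n := n) (Nat.le_add_right m i)
      simpa using this
    have hp1 : (0:ℝ) < n.choose (m + i) := by
      exact_mod_cast Nat.choose_pos (hnm i hi)
    have hp2 : (0:ℝ) < n.choose m := by exact_mod_cast Nat.choose_pos hm
    have h1' : (n.choose (m + i) : ℝ) * ((m + i).choose m) = (n.choose m) * ((n - m).choose i) := by
      exact_mod_cast congrArg (Nat.cast : ℕ → ℝ) h1
    field_simp
    linarith [h1']
  rw [Finset.sum_congr rfl step, ← Finset.sum_mul]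
  have hsum : ∑ i ∈ range (n - m + 1), ((m + i).choose m : ℝ) = ((n+1).choose (m+1) : ℝ) := by
    rw [← Nat.cast_sum]
    norm_cast
    rw [← Nat.sum_Icc_choose n m]
    apply Finset.sum_nbij' (fun i => m + i) (fun k => k - m)
    · intro a ha; simp at ha ⊢; omega
    · intro a ha; simp at ha ⊢; omega
    · intro a ha; simp
    · intro a ha; simp at ha; omega
    · intro a ha; rfl
  rw [hsum]
  have hmul := Nat.add_one_mul_choose_eq n m
  have hmul' : ((n+1) : ℝ) * (n.choose m) = ((n+1).choose (m+1)) * (m+1) := by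
    exact_mod_cast congrArg (Nat.cast : ℕ → ℝ) hmul
  have hp2 : (0:ℝ) < n.choose m := by exact_mod_cast Nat.choose_pos hm
  have : (0:ℝ) < (m:ℝ) + 1 := by positivity
  field_simp
  linarith [hmul']

/-- If the value of a coalition `u` is the sum of nonnegative variance components `σ2 v`
over `v ⊆ u` (with `σ2 ∅ = 0`), then the Shapley value of player `j` is
`∑_{u ∋ j} σ2 u / |u|`. -/
theorem shapley_of_anova (d : ℕ) (hd : 1 ≤ d) (σ2 : Finset (Fin d) → ℝ)
    (hσ : ∀ u, 0 ≤ σ2 u) (h0 : σ2 ∅ = 0) (j : Fin d) :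
    shapley (fun u => ∑ v ∈ u.powerset, σ2 v) j
      = ∑ u ∈ Finset.univ.powerset.filter (fun u => j ∈ u), σ2 u / u.card := by
  classical
  set E := (Finset.univ.erase j) with hE
  have hEcard : E.card = d - 1 := by
    rw [hE, card_erase_of_mem (mem_univ j), card_univ, Fintype.card_fin]
  -- Step 1: the marginal contribution
  have hdiff : ∀ u ∈ E.powerset,
      ((∑ v ∈ (insert j u).powerset, σ2 v) - ∑ v ∈ u.powerset, σ2 v)
        = ∑ v ∈ u.powerset, σ2 (insert j v) := by
    intro u hu
    have hj : j ∉ u := fun h => (mem_erase.mp (mem_powerset.mp hu h)).1 rfl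
    have hdisj : Disjoint u.powerset (u.powerset.image (insert j)) := by
      rw [Finset.disjoint_left]
      intro v hv hv'
      obtain ⟨w, hw, rfl⟩ := Finset.mem_image.mp hv'
      exact hj (mem_powerset.mp hv (mem_insert_self j w))
    rw [Finset.powerset_insert, Finset.sum_union hdisj, Finset.sum_image]
    · ring
    · intro v₁ h₁ v₂ h₂ h
      have e₁ : j ∉ v₁ := fun hh => hj (mem_powerset.mp h₁ hh)
      have e₂ : j ∉ v₂ := fun hh => hj (mem_powerset.mp h₂ hh)
      have := congrArg (Finset.erase · j) h
      simpa [Finset.erase_insert e₁, Finset.erase_insert e₂] using this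
  -- Step 2 & 3: expand, swap sums
  have hswap :
      ∑ u ∈ E.powerset, ((Nat.choose (d - 1) u.card : ℝ))⁻¹
          * ((∑ v ∈ (insert j u).powerset, σ2 v) - ∑ v ∈ u.powerset, σ2 v)
        = ∑ v ∈ E.powerset, ∑ u ∈ E.powerset.filter (fun u => v ⊆ u),
            ((Nat.choose (d - 1) u.card : ℝ))⁻¹ * σ2 (insert j v) := by
    rw [Finset.sum_congr rfl (fun u hu => by rw [hdiff u hu, Finset.mul_sum])]
    apply Finset.sum_comm'
    intro u v
    simp only [mem_powerset, mem_filter]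
    constructor
    · rintro ⟨h1, h2⟩; exact ⟨⟨h1, h2⟩, h2.trans h1⟩
    · exact fun h => h.1
  -- Step 4: inner sum
  have hinner : ∀ v ∈ E.powerset,
      ∑ u ∈ E.powerset.filter (fun u => v ⊆ u), ((Nat.choose (d - 1) u.card : ℝ))⁻¹
        = (d : ℝ) / (v.card + 1) := by
    intro v hv
    have hvE : v ⊆ E := mem_powerset.mp hv
    have htrans : ∑ u ∈ E.powerset.filter (fun u => v ⊆ u),
        ((Nat.choose (d - 1) u.card : ℝ))⁻¹
        = ∑ w ∈ (E \ v).powerset, ((Nat.choose (d - 1) (v.card + w.card) : ℝ))⁻¹ := by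
      apply Finset.sum_nbij' (fun u => u \ v) (fun w => v ∪ w)
      · intro u hu
        simp only [mem_filter, mem_powerset] at hu ⊢
        exact sdiff_subset_sdiff hu.1 (Finset.Subset.refl v)
      · intro w hw
        simp only [mem_powerset, mem_filter] at hw ⊢
        exact ⟨Finset.union_subset hvE (hw.trans Finset.sdiff_subset), Finset.subset_union_left⟩
      · intro u hu
        simp only [mem_filter, mem_powerset] at hu
        exact Finset.union_sdiff_of_subset hu.2
      · intro w hw
        simp only [mem_powerset] at hw
        have : Disjoint v w := Finset.disjoint_of_subset_right hw Finset.disjoint_sdiff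
        rw [Finset.union_sdiff_cancel_left this]
      · intro u hu
        simp only [mem_filter, mem_powerset] at hu
        have hle := Finset.card_le_card hu.2
        rw [Finset.card_sdiff_of_subset hu.2, Nat.add_sub_cancel' hle]
    rw [htrans, Finset.sum_powerset_apply_card (fun m => ((Nat.choose (d - 1) (v.card + m) : ℝ))⁻¹)]
    have hcards : (E \ v).card = (d - 1) - v.card := by
      rw [Finset.card_sdiff_of_subset hvE, hEcard]
    have hvcard : v.card ≤ d - 1 := hEcard ▸ Finset.card_le_card hvE
    rw [hcards]
    have := key_choose (d - 1) v.card hvcard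
    have hd1 : ((d : ℕ) - 1 : ℕ) + 1 = d := by omega
    calc ∑ m ∈ range ((d - 1 - v.card) + 1),
          ((d - 1 - v.card).choose m) • ((Nat.choose (d - 1) (v.card + m) : ℝ))⁻¹
        = ∑ m ∈ range ((d - 1 - v.card) + 1),
          ((d - 1 - v.card).choose m : ℝ) * ((Nat.choose (d - 1) (v.card + m) : ℝ))⁻¹ := by
          simp [nsmul_eq_mul]
      _ = ((d - 1 : ℕ) + 1 : ℝ) / (v.card + 1) := this
      _ = (d : ℝ) / (v.card + 1) := by rw [← Nat.cast_add_one, hd1]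
  -- Step 5: assemble
  unfold shapley
  rw [hswap]
  have : ∑ v ∈ E.powerset, ∑ u ∈ E.powerset.filter (fun u => v ⊆ u),
      ((Nat.choose (d - 1) u.card : ℝ))⁻¹ * σ2 (insert j v)
      = ∑ v ∈ E.powerset, ((d : ℝ) / (v.card + 1)) * σ2 (insert j v) := by
    refine Finset.sum_congr rfl fun v hv => ?_
    rw [← Finset.sum_mul, hinner v hv]
  rw [this, Finset.mul_sum]
  have hd0 : (d : ℝ) ≠ 0 := by positivity
  -- RHS reindexing
  rw [Finset.sum_nbij' (i := fun v => insert j v) (j := fun u => u.erase j)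
    (f := fun v => (d:ℝ)⁻¹ * ((d : ℝ) / (v.card + 1) * σ2 (insert j v)))
    (g := fun u => σ2 u / u.card)]
  · intro v hv
    simp only [mem_powerset, mem_filter, hE] at hv ⊢
    exact ⟨Finset.subset_univ _, mem_insert_self j v⟩
  · intro u hu
    simp only [mem_filter, mem_powerset, hE] at hu ⊢
    intro x hx
    exact mem_erase.mpr ⟨(mem_erase.mp hx).1, mem_univ x⟩
  · intro v hv
    simp only [mem_powerset, hE] at hv
    have hj : j ∉ v := fun h => (mem_erase.mp (hv h)).1 rfl
    exact Finset.erase_insert hj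
  · intro u hu
    simp only [mem_filter] at hu
    exact Finset.insert_erase hu.2
  · intro v hv
    simp only [mem_powerset, hE] at hv
    have hj : j ∉ v := fun h => (mem_erase.mp (hv h)).1 rfl
    rw [Finset.card_insert_of_notMem hj]
    push_cast
    field_simp
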